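/- Let p be a weakly summable ultrafilter on an abelian group G of the form G = ⊕_{n<ω} T (or more generally any product-like abelian group with projections π_n). If for some n there is A ∈ p with π_n[A] finite, then {x ∈ G : π_n(x) = 0} ∈ p. -/

import Mathlib

open DirectSum

/-- The set of finite sums of a sequence in an abelian group. -/
def FSseq {G : Type*} [AddCommGroup G] (x : ℕ → G) : Set G :=
  {s | ∃ a : Finset ℕ, a.Nonempty ∧ ∑ k ∈ a, x k = s}

/-- An ultrafilter on an abelian group is weakly summable if every member
contains the set of finite sums of some sequence. -/
def WeaklySummable {G : Type*} [AddCommGroup G] (p : Ultrafilter G) : Prop :=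
  ∀ A ∈ p, ∃ x : ℕ → G, FSseq x ⊆ A

/-- If `p` is a weakly summable ultrafilter on a direct sum `⊕_{n<ω} H n`, and some
member `A ∈ p` has finite image under the `n`-th coordinate projection, then the
set of elements whose `n`-th coordinate vanishes belongs to `p`. -/
theorem weaklySummable_coord_zero_mem (H : ℕ → Type*) [∀ n, AddCommGroup (H n)]
    (p : Ultrafilter (⨁ n, H n)) (hp : WeaklySummable p) (n : ℕ)
    (A : Set (⨁ n, H n)) (hA : A ∈ p)
    (hfin : ((fun x : ⨁ n, H n => x n) '' A).Finite) :
    {x : ⨁ n, H n | x n = 0} ∈ p := by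
  by_contra h
  have hB : {x : ⨁ n, H n | x n ≠ 0} ∈ p := by
    have := (Ultrafilter.compl_mem_iff_notMem (s := {x : ⨁ n, H n | x n = 0})).2 h
    exact this
  obtain ⟨x, hx⟩ := hp _ (Filter.inter_mem hA hB)
  -- partial sums
  set S : ℕ → (⨁ n, H n) := fun m => ∑ k ∈ Finset.range (m + 1), x k with hS
  have hSFS : ∀ m, S m ∈ FSseq x := fun m =>
    ⟨Finset.range (m + 1), ⟨0, Finset.mem_range.2 (Nat.succ_pos m)⟩, rfl⟩
  have hmapsTo : Set.MapsTo (fun m => (S m) n) Set.univ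
      ((fun x : ⨁ n, H n => x n) '' A) := by
    intro m _
    exact ⟨S m, (hx (hSFS m)).1, rfl⟩
  obtain ⟨i, -, j, -, hij, heq⟩ :=
    Set.infinite_univ.exists_ne_map_eq_of_mapsTo hmapsTo hfin
  wlog hlt : i < j generalizing i j
  · exact this j i hij.symm heq.symm (by omega)
  have hne : (Finset.Ico (i + 1) (j + 1)).Nonempty := by
    refine ⟨i + 1, Finset.mem_Ico.2 ⟨le_rfl, by omega⟩⟩
  have hmem : (∑ k ∈ Finset.Ico (i + 1) (j + 1), x k) ∈ FSseq x := ⟨_, hne, rfl⟩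
  have h1 : (∑ k ∈ Finset.Ico (i + 1) (j + 1), x k) = S j - S i := by
    rw [hS]
    exact Finset.sum_Ico_eq_sub _ (by omega)
  have h2 := (hx hmem).2
  apply h2
  show (∑ k ∈ Finset.Ico (i + 1) (j + 1), x k) n = 0
  rw [h1]
  have : (S j - S i) n = (S j) n - (S i) n := by
    simp [DFinsupp.sub_apply]
  rw [this, heq, sub_self]
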